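/- Let n ≥ 2 be an integer. Then for every integer m ≥ 2, every real t ≥ 1, and all positive reals u, v with u·v ≥ 1, one has m·(t²uv + t^{2n+1}(uv)^{n+1}) < (Σ_{j=0}^{n} t^{2j}(uv)^j)^m. -/

import Mathlib

theorem stmt_14 (n : ℕ) (hn : 2 ≤ n) :
    ∀ m : ℕ, 2 ≤ m → ∀ t u v : ℝ, 1 ≤ t → 0 < u → 0 < v → 1 ≤ u * v →
      (m : ℝ) * (t ^ 2 * (u * v) + t ^ (2 * n + 1) * (u * v) ^ (n + 1)) <
        (∑ j ∈ Finset.range (n + 1), t ^ (2 * j) * (u * v) ^ j) ^ m := by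
  intro m hm t u v ht hu hv hw
  set w : ℝ := u * v with hwdef
  set a : ℝ := t ^ 2 * w with hadef
  have ht0 : (0:ℝ) < t := lt_of_lt_of_le one_pos ht
  have ht2 : (1:ℝ) ≤ t ^ 2 := one_le_pow₀ ht
  have ha1 : (1:ℝ) ≤ a := by nlinarith
  have ha0 : (0:ℝ) < a := lt_of_lt_of_le one_pos ha1
  -- rewrite the sum as a geometric sum in a
  have hSrw : ∑ j ∈ Finset.range (n + 1), t ^ (2 * j) * w ^ j
      = ∑ j ∈ Finset.range (n + 1), a ^ j := by
    apply Finset.sum_congr rfl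
    intro j _
    rw [hadef, mul_pow, pow_mul, hwdef, mul_pow]; ring
  set S : ℝ := ∑ j ∈ Finset.range (n + 1), a ^ j with hSdef
  rw [hSrw]
  have han : (1:ℝ) ≤ a ^ n := one_le_pow₀ ha1
  -- S ≥ 1 + a + a^n
  have hT : ({0, 1, n} : Finset ℕ) ⊆ Finset.range (n + 1) := by
    intro x hx
    simp only [Finset.mem_insert, Finset.mem_singleton] at hx
    simp only [Finset.mem_range]
    omega
  have hTsum : ∑ j ∈ ({0, 1, n} : Finset ℕ), a ^ j = 1 + a + a ^ n := by
    rw [Finset.sum_insert (by simp; omega), Finset.sum_insert (by simp; omega),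
      Finset.sum_singleton]
    ring
  have hSge : 1 + a + a ^ n ≤ S := by
    rw [← hTsum]
    apply Finset.sum_le_sum_of_subset_of_nonneg hT
    intro j _ _
    positivity
  have hS3 : (3:ℝ) ≤ S := by nlinarith
  have hS0 : (0:ℝ) < S := by linarith
  have hX0 : (0:ℝ) < a + a ^ (n + 1) := by positivity
  -- key strict inequality for the square
  have hkey2 : 2 * (a + a ^ (n + 1)) < S ^ 2 := by
    have h1 : a ^ (n + 1) = a ^ n * a := pow_succ a n
    nlinarith [sq_nonneg (a ^ n - a), sq_nonneg (a ^ n + a), mul_pos ha0 ha0,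
      mul_le_mul_of_nonneg_left hSge (le_of_lt hS0)]
  -- main induction: ∀ m ≥ 2, m * (a + a^(n+1)) < S ^ m
  have hmain : ∀ k : ℕ, 2 ≤ k → (k : ℝ) * (a + a ^ (n + 1)) < S ^ k := by
    intro k hk
    induction k, hk using Nat.le_induction with
    | base => simpa using (by linarith : (2:ℝ) * (a + a ^ (n + 1)) < S ^ 2)
    | succ k hk ih =>
      have h3 : (3:ℝ) * S ^ k ≤ S ^ (k + 1) := by
        rw [pow_succ]
        nlinarith [pow_pos hS0 k]
      have : ((k:ℝ) + 1) * (a + a ^ (n + 1)) ≤ 3 * ((k:ℝ) * (a + a ^ (n + 1))) := by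
        have hk1 : (2:ℝ) ≤ (k:ℝ) := by exact_mod_cast hk
        nlinarith
      push_cast
      nlinarith [pow_pos hS0 k]
  -- compare LHS with m * (a + a^(n+1))
  have hLHS : t ^ 2 * w + t ^ (2 * n + 1) * w ^ (n + 1) ≤ a + a ^ (n + 1) := by
    have h1 : a ^ (n + 1) = t ^ (2 * (n + 1)) * w ^ (n + 1) := by
      rw [hadef, mul_pow, ← pow_mul]
    have h2 : t ^ (2 * n + 1) ≤ t ^ (2 * (n + 1)) := by
      apply pow_le_pow_right₀ ht
      omega
    have h3 : (0:ℝ) ≤ w ^ (n + 1) := by positivity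
    rw [h1]
    have := mul_le_mul_of_nonneg_right h2 h3
    linarith
  have hm' : (0:ℝ) < (m:ℝ) := by
    have : (2:ℝ) ≤ (m:ℝ) := by exact_mod_cast hm
    linarith
  calc (m : ℝ) * (t ^ 2 * w + t ^ (2 * n + 1) * w ^ (n + 1))
      ≤ (m : ℝ) * (a + a ^ (n + 1)) := by
        apply mul_le_mul_of_nonneg_left hLHS (le_of_lt hm')
    _ < S ^ m := hmain m hm
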